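/- Let G be a digraph on a finite vertex set V and let S ⊆ V be a subset with S ≠ ∅ and V \ S ≠ ∅. Suppose that either every arc of G with tail in S has its head in S (i.e., (u,w) ∈ E(G) and u ∈ S imply w ∈ S), or every arc of G with head in S has its tail in S (i.e., (w,u) ∈ E(G) and u ∈ S imply w ∈ S). If the induced subdigraph H = G[V \ S] (with arc set E(G) ∩ ((V\S) × (V\S))) does not allow the nSSP, then G does not allow the nSSP, i.e., no matrix A ∈ M(G) has the nSSP. -/

import Mathlib

open Matrix

/-- `A` has the non-symmetric Strong Spectral Property (nSSP): the only matrix `X`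
with `A ∘ X = O` (Hadamard product) and `A Xᵀ - Xᵀ A = O` is `X = O`. -/
def HasNSSP {V : Type*} [Fintype V] (A : Matrix V V ℝ) : Prop :=
  ∀ X : Matrix V V ℝ,
    (∀ i j, A i j * X i j = 0) → A * Xᵀ - Xᵀ * A = 0 → X = 0

/-- `A ∈ M(G)`: the entry `A i j` is nonzero exactly when `(i,j)` is an arc of the digraph. -/
def MemPattern {V : Type*} (E : Set (V × V)) (A : Matrix V V ℝ) : Prop :=
  ∀ i j, A i j ≠ 0 ↔ (i, j) ∈ E

/-- The digraph with arc set `E` requires the nSSP. -/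
def RequiresNSSP {V : Type*} [Fintype V] (E : Set (V × V)) : Prop :=
  ∀ A : Matrix V V ℝ, MemPattern E A → HasNSSP A

/-- The digraph with arc set `E` allows the nSSP. -/
def AllowsNSSP {V : Type*} [Fintype V] (E : Set (V × V)) : Prop :=
  ∃ A : Matrix V V ℝ, MemPattern E A ∧ HasNSSP A

/-- Out-neighbourhood `N⁺_G[v]`. -/
def outNbhd {V : Type*} (E : Set (V × V)) (v : V) : Set V := {u | (v, u) ∈ E}

/-- In-neighbourhood `N⁻_G[v]`. -/
def inNbhd {V : Type*} (E : Set (V × V)) (v : V) : Set V := {w | (w, v) ∈ E}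

/-- The double path `P_{n,L}` on `n` vertices (0-indexed by `Fin n`, so that the
vertex with 1-based label `ℓ` is `⟨ℓ-1, _⟩`), with loops exactly at vertices in `L`. -/
def doublePathE (n : ℕ) (L : Set (Fin n)) : Set (Fin n × Fin n) :=
  {q | q.1.val + 1 = q.2.val ∨ q.2.val + 1 = q.1.val ∨ (q.1 = q.2 ∧ q.1 ∈ L)}

lemma hasNSSP_transpose_aux {V : Type*} [Fintype V] {A : Matrix V V ℝ} (h : HasNSSP A) :
    HasNSSP Aᵀ := by
  intro X h1 h2
  have h1' : ∀ i j, A i j * Xᵀ i j = 0 := fun i j => h1 j i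
  have h2' : A * Xᵀᵀ - Xᵀᵀ * A = 0 := by
    rw [Matrix.transpose_transpose]
    have h3 : (Aᵀ * Xᵀ - Xᵀ * Aᵀ)ᵀ = 0 := by rw [h2]; simp
    simp only [Matrix.transpose_sub, Matrix.transpose_mul, Matrix.transpose_transpose] at h3
    rw [← neg_sub, h3, neg_zero]
  have := h Xᵀ h1' h2'
  rwa [Matrix.transpose_eq_zero] at this

lemma key_aux {V : Type*} [Fintype V] (S : Set V) [Fintype ↥(Sᶜ : Set V)] (E : Set (V × V))
    (hdir : ∀ u w : V, (u, w) ∈ E → u ∈ S → w ∈ S)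
    (hH : ∀ B : Matrix ↥(Sᶜ : Set V) ↥(Sᶜ : Set V) ℝ,
      MemPattern {p : ↥(Sᶜ : Set V) × ↥(Sᶜ : Set V) | ((p.1 : V), (p.2 : V)) ∈ E} B →
      ¬ HasNSSP B)
    (A : Matrix V V ℝ) (hA : MemPattern E A) : ¬ HasNSSP A := by
  classical
  haveI : Fintype ↥S := Fintype.ofFinite _
  intro hN
  have sum_split : ∀ f : V → ℝ, ∑ k, f k = (∑ t : ↥S, f ↑t) + (∑ c : ↥(Sᶜ:Set V), f ↑c) := by
    intro f
    rw [← Equiv.sum_comp (Equiv.Set.sumCompl S) f, Fintype.sum_sum_type]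
    simp
  have hA0 : ∀ i j : V, i ∈ S → j ∉ S → A i j = 0 := by
    intro i j hi hj
    by_contra h
    exact hj (hdir i j ((hA i j).mp h) hi)
  set B : Matrix ↥(Sᶜ:Set V) ↥(Sᶜ:Set V) ℝ := fun i j => A i j with hBdef
  have hBpat : MemPattern {p : ↥(Sᶜ:Set V) × ↥(Sᶜ:Set V) | ((p.1 : V), (p.2 : V)) ∈ E} B := fun i j => hA i j
  have hBn := hH B hBpat
  unfold HasNSSP at hBn
  push_neg at hBn
  obtain ⟨Y, hY1, hY2, hYne⟩ := hBn
  set ATT : Matrix ↥S ↥S ℝ := fun i j => A i j with hATTdef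
  set ACT : Matrix ↥(Sᶜ:Set V) ↥S ℝ := fun i j => A i j with hACTdef
  -- key contradiction builder
  have contra : ∀ (Y : Matrix ↥(Sᶜ:Set V) ↥(Sᶜ:Set V) ℝ) (Z : Matrix ↥S ↥(Sᶜ:Set V) ℝ),
      (∀ i j, B i j * Y i j = 0) → B * Yᵀ - Yᵀ * B = 0 →
      B * Zᵀ - Zᵀ * ATT = Yᵀ * ACT → (Y ≠ 0 ∨ Z ≠ 0) → False := by
    intro Y Z hY1 hY2 hZeq hne
    set X : Matrix V V ℝ := fun i j =>
      if hj : j ∈ (Sᶜ : Set V) then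
        if hi : i ∈ (Sᶜ : Set V) then Y ⟨i, hi⟩ ⟨j, hj⟩
        else Z ⟨i, Set.notMem_compl_iff.mp hi⟩ ⟨j, hj⟩
      else 0 with hXdef
    have hXe1 : ∀ (i j : ↥(Sᶜ:Set V)), X ↑i ↑j = Y i j := by
      intro i j
      simp only [hXdef]
      rw [dif_pos j.2, dif_pos i.2]
    have hXe2 : ∀ (i : ↥S) (j : ↥(Sᶜ:Set V)), X ↑i ↑j = Z i j := by
      intro i j
      have hi : ¬ ((i : V) ∈ (Sᶜ : Set V)) := Set.notMem_compl_iff.mpr i.2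
      simp only [hXdef]
      rw [dif_pos j.2, dif_neg hi]
    have hXe3 : ∀ (i : V) (j : ↥S), X i ↑j = 0 := by
      intro i j
      have hj : ¬ ((j : V) ∈ (Sᶜ : Set V)) := Set.notMem_compl_iff.mpr j.2
      simp only [hXdef]
      rw [dif_neg hj]
    have hXA : ∀ i j, A i j * X i j = 0 := by
      intro i j
      by_cases hj : j ∈ (Sᶜ : Set V)
      · by_cases hi : i ∈ (Sᶜ : Set V)
        · have : X i j = Y ⟨i, hi⟩ ⟨j, hj⟩ := hXe1 ⟨i, hi⟩ ⟨j, hj⟩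
          rw [this]
          exact hY1 ⟨i, hi⟩ ⟨j, hj⟩
        · rw [hA0 i j (Set.notMem_compl_iff.mp hi) hj, zero_mul]
      · have : X i j = 0 := by simp only [hXdef]; rw [dif_neg hj]
        rw [this, mul_zero]
    have hcomm : A * Xᵀ - Xᵀ * A = 0 := by
      ext i j
      simp only [Matrix.sub_apply, Matrix.mul_apply, Matrix.transpose_apply,
        Matrix.zero_apply, sub_eq_zero]
      rw [sum_split (fun k => A i k * X j k), sum_split (fun k => X k i * A k j)]
      by_cases hi : i ∈ S
      · have e1 : ∀ c : ↥(Sᶜ:Set V), A i ↑c = 0 := fun c => hA0 i c hi c.2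
        have e2 : ∀ k : V, X k i = 0 := fun k => hXe3 k ⟨i, hi⟩
        simp [e1, e2, hXe3]
      · have hi' : i ∈ (Sᶜ : Set V) := hi
        set i' : ↥(Sᶜ:Set V) := ⟨i, hi'⟩
        by_cases hj : j ∈ S
        · set j' : ↥S := ⟨j, hj⟩
          have lhs1 : ∀ t : ↥S, A i ↑t * X j ↑t = 0 := fun t => by rw [hXe3 j t, mul_zero]
          have lhs2 : ∀ c : ↥(Sᶜ:Set V), A i ↑c * X j ↑c = B i' c * Z j' c := fun c => by
            rw [show X j ↑c = Z j' c from hXe2 j' c]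
          have rhs1 : ∀ t : ↥S, X ↑t i * A ↑t j = Z t i' * ATT t j' := fun t => by
            rw [hXe2 t i']
          have rhs2 : ∀ c : ↥(Sᶜ:Set V), X ↑c i * A ↑c j = Y c i' * ACT c j' := fun c => by
            rw [hXe1 c i']
          simp only [lhs1, lhs2, rhs1, rhs2, Finset.sum_const_zero, zero_add]
          have hz := congrFun (congrFun hZeq i') j'
          simp only [Matrix.sub_apply, Matrix.mul_apply, Matrix.transpose_apply] at hz
          linarith [hz]
        · have hj' : j ∈ (Sᶜ : Set V) := hj
          set j' : ↥(Sᶜ:Set V) := ⟨j, hj'⟩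
          have lhs1 : ∀ t : ↥S, A i ↑t * X j ↑t = 0 := fun t => by rw [hXe3 j t, mul_zero]
          have lhs2 : ∀ c : ↥(Sᶜ:Set V), A i ↑c * X j ↑c = B i' c * Y j' c := fun c => by
            rw [show X j ↑c = Y j' c from hXe1 j' c]
          have rhs1 : ∀ t : ↥S, X ↑t i * A ↑t j = 0 := fun t => by
            exact by rw [hA0 ↑t j t.2 hj, mul_zero]
          have rhs2 : ∀ c : ↥(Sᶜ:Set V), X ↑c i * A ↑c j = Y c i' * B c j' := fun c => by
            rw [hXe1 c i']
          simp only [lhs1, lhs2, rhs1, rhs2, Finset.sum_const_zero, zero_add]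
          have hz := congrFun (congrFun hY2 i') j'
          simp only [Matrix.sub_apply, Matrix.mul_apply, Matrix.transpose_apply,
            Matrix.zero_apply, sub_eq_zero] at hz
          linarith [hz]
    have hX0 := hN X hXA hcomm
    rcases hne with h | h
    · apply h; ext i j
      have := hXe1 i j
      rw [hX0] at this
      simpa using this.symm
    · apply h; ext i j
      have := hXe2 i j
      rw [hX0] at this
      simpa using this.symm
  -- the Sylvester-type linear map
  let ψ : Matrix ↥S ↥(Sᶜ:Set V) ℝ →ₗ[ℝ] Matrix ↥(Sᶜ:Set V) ↥S ℝ :=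
    { toFun := fun Z => B * Zᵀ - Zᵀ * ATT
      map_add' := by
        intro x y
        simp only [Matrix.transpose_add, Matrix.mul_add, Matrix.add_mul]
        abel
      map_smul' := by
        intro c x
        simp only [Matrix.transpose_smul, Matrix.mul_smul, Matrix.smul_mul, smul_sub,
          RingHom.id_apply] }
  have hrank : Module.finrank ℝ (Matrix ↥S ↥(Sᶜ:Set V) ℝ) = Module.finrank ℝ (Matrix ↥(Sᶜ:Set V) ↥S ℝ) := by
    simp [Module.finrank_matrix, mul_comm]
  by_cases hinj : Function.Injective ψ
  · obtain ⟨Z, hZ⟩ :=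
      (LinearMap.injective_iff_surjective_of_finrank_eq_finrank hrank).mp hinj (Yᵀ * ACT)
    exact contra Y Z hY1 hY2 hZ (Or.inl hYne)
  · rw [injective_iff_map_eq_zero] at hinj
    push_neg at hinj
    obtain ⟨Z, hZ0, hZne⟩ := hinj
    refine contra 0 Z (by simp) (by simp) ?_ (Or.inr hZne)
    rw [Matrix.transpose_zero, Matrix.zero_mul]; exact hZ0

/-- if all arcs leaving `S` stay in `S`, or all arcs entering `S` come from `S`,
and the induced subdigraph on `V \ S` does not allow the nSSP, then `G` does not allow the nSSP. -/
theorem not_allow_nSSP_of_induced {V : Type*} [Fintype V] (S : Set V)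
    [Fintype ↥(Sᶜ : Set V)] (E : Set (V × V))
    (hS : S.Nonempty) (hSc : (Sᶜ : Set V).Nonempty)
    (hdir : (∀ u w : V, (u, w) ∈ E → u ∈ S → w ∈ S) ∨
            (∀ u w : V, (w, u) ∈ E → u ∈ S → w ∈ S))
    (hH : ∀ B : Matrix ↥(Sᶜ : Set V) ↥(Sᶜ : Set V) ℝ,
      MemPattern {p : ↥(Sᶜ : Set V) × ↥(Sᶜ : Set V) | ((p.1 : V), (p.2 : V)) ∈ E} B →
      ¬ HasNSSP B) :
    ∀ A : Matrix V V ℝ, MemPattern E A → ¬ HasNSSP A := by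
  intro A hA hN
  rcases hdir with h | h
  · exact key_aux S E h hH A hA hN
  · have h' : ∀ u w : V, (u, w) ∈ {p : V × V | (p.2, p.1) ∈ E} → u ∈ S → w ∈ S :=
      fun u w huw => h u w huw
    have hH' : ∀ B : Matrix ↥(Sᶜ : Set V) ↥(Sᶜ : Set V) ℝ,
        MemPattern {p : ↥(Sᶜ : Set V) × ↥(Sᶜ : Set V) |
          ((p.1 : V), (p.2 : V)) ∈ {p : V × V | (p.2, p.1) ∈ E}} B → ¬ HasNSSP B := by
      intro B hB hBn
      have hBt : MemPattern {p : ↥(Sᶜ : Set V) × ↥(Sᶜ : Set V) |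
          ((p.1 : V), (p.2 : V)) ∈ E} Bᵀ := fun i j => hB j i
      exact hH Bᵀ hBt (hasNSSP_transpose_aux hBn)
    have hAt : MemPattern {p : V × V | (p.2, p.1) ∈ E} Aᵀ := fun i j => hA j i
    exact key_aux S _ h' hH' Aᵀ hAt (hasNSSP_transpose_aux hN)
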